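/- Let (R,m,K) be a Noetherian local ring with j(R) = 0, let T be its total quotient ring, and let S = {f ∈ T : height D(f) ≥ 2}. If S_0 is a ring with R ⊆ S_0 ⊆ S such that S_0 is a finitely generated R-module and S_0 is S2 as an R-module, then S_0 = S. -/

import Mathlib

open CategoryTheory

universe u

set_option maxHeartbeats 1000000
set_option synthInstance.maxHeartbeats 1000000

/-- The height of an ideal: the infimum of the heights of the primes containing it. -/
noncomputable def idealHeight {R : Type*} [CommRing R] (I : Ideal R) : ℕ∞ :=
  ⨅ p ∈ {p : PrimeSpectrum R | I ≤ p.asIdeal}, Order.height p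

/-- An `R`-module `M` is indecomposable: it is nonzero and is not the (internal) direct sum
of two nonzero submodules. -/
def IsIndecomposable (R M : Type*) [CommRing R] [AddCommGroup M] [Module R M] : Prop :=
  (∃ x : M, x ≠ 0) ∧ ∀ N N' : Submodule R M, IsCompl N N' → N = ⊥ ∨ N' = ⊥

/-- A ring is equidimensional if `dim (R/p) = dim R` for every minimal prime `p`. -/
def IsEquidimensional (R : Type*) [CommRing R] : Prop :=
  ∀ p ∈ minimalPrimes R, ringKrullDim (R ⧸ p) = ringKrullDim R

/-- `j(R) = 0`: no nonzero ideal of `R` has Krull dimension as an `R`-module (i.e. the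
dimension of `R` modulo the annihilator of the ideal) smaller than `dim R`. -/
def JIdealZero (R : Type*) [CommRing R] : Prop :=
  ∀ I : Ideal R, ringKrullDim (R ⧸ Submodule.annihilator I) < ringKrullDim R → I = ⊥

/-- `M` is `S₂` as an `R`-module: every ideal of height at least one contains a
nonzerodivisor on `M`, and every ideal of height at least two contains a regular
sequence of length two on `M`. -/
def IsS2Module (R M : Type*) [CommRing R] [AddCommGroup M] [Module R M] : Prop :=
  (∀ I : Ideal R, 1 ≤ idealHeight I → ∃ x ∈ I, ∀ m : M, x • m = 0 → m = 0) ∧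
  (∀ I : Ideal R, 2 ≤ idealHeight I → ∃ x ∈ I, ∃ y ∈ I,
      (∀ m : M, x • m = 0 → m = 0) ∧
      ∀ m : M, y • m ∈ Ideal.span {x} • (⊤ : Submodule R M) →
        m ∈ Ideal.span {x} • (⊤ : Submodule R M))

/-- For `f` in an `R`-algebra `T`, the ideal `D(f) = {r ∈ R : r • f ∈ R}`. -/
def Dideal (R T : Type*) [CommRing R] [CommRing T] [Algebra R T] (f : T) :
    Ideal R :=
  Submodule.comap (LinearMap.toSpanSingleton R T f) (LinearMap.range (Algebra.linearMap R T))

/-- A subring `S` with `R ⊆ S ⊆ T` (`T` an `R`-algebra, in practice the total quotient ring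
of `R`) is an `S₂`-ification of `R` if it is module-finite over `R`, is `S₂` as an
`R`-module, and `D(s)` has height at least two for every `s ∈ S`. -/
def IsS2ification (R T : Type*) [CommRing R] [CommRing T] [Algebra R T]
    (S : Subalgebra R T) : Prop :=
  Module.Finite R S ∧ IsS2Module R S ∧ ∀ s ∈ S, 2 ≤ idealHeight (Dideal R T s)

/-- The graph `Γ_R` whose vertices are the minimal primes of `R`, with an edge joining
`P` and `Q` iff `P + Q` has height at most one, is connected: any two minimal primes are
joined by a finite chain of minimal primes in which consecutive sums have height at most one. -/
def GammaConnected (R : Type*) [CommRing R] : Prop :=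
  ∀ p ∈ minimalPrimes R, ∀ q ∈ minimalPrimes R,
    ∃ (r : ℕ) (c : ℕ → Ideal R), c 0 = p ∧ c r = q ∧
      (∀ i, i ≤ r → c i ∈ minimalPrimes R) ∧
      (∀ i, i < r → idealHeight (c i ⊔ c (i + 1)) ≤ 1)

/-- The set underlying the `S₂`-ification: the elements `f` of the total quotient ring
of `R` such that `D(f)` has height at least two. -/
def s2Set (R : Type u) [CommRing R] : Set (FractionRing R) :=
  {f : FractionRing R | 2 ≤ idealHeight (Dideal R (FractionRing R) f)}
/-- Let `(R,m,K)` be a Noetherian local ring with `j(R) = 0`, let `T` be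
its total quotient ring, and let `S = {f ∈ T : height D(f) ≥ 2}`.  If `S₀` is a ring with
`R ⊆ S₀ ⊆ S` such that `S₀` is a finitely generated `R`-module and `S₀` is `S₂` as an
`R`-module, then `S₀ = S`. -/
theorem subring_s2_eq_s2Set
    {R : Type u} [CommRing R] [IsNoetherianRing R] [IsLocalRing R]
    (hj : JIdealZero R)
    (S₀ : Subalgebra R (FractionRing R))
    (hsub : (↑S₀ : Set (FractionRing R)) ⊆ s2Set R)
    (hfin : Module.Finite R S₀) (hS2 : IsS2Module R S₀) :
    (↑S₀ : Set (FractionRing R)) = s2Set R := by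
  apply Set.Subset.antisymm hsub
  intro f hf
  -- the ideal J = {r : r • f ∈ S₀}
  set J : Ideal R :=
    Submodule.comap (LinearMap.toSpanSingleton R (FractionRing R) f) (Subalgebra.toSubmodule S₀) with hJ
  have hDJ : Dideal R (FractionRing R) f ≤ J := by
    intro r hr
    rw [Dideal, Submodule.mem_comap] at hr
    rcases LinearMap.mem_range.mp hr with ⟨s, hs⟩
    have hs' : algebraMap R (FractionRing R) s = r • f := hs
    show r • f ∈ S₀
    rw [← hs']
    exact S₀.algebraMap_mem s
  have hJ2 : 2 ≤ idealHeight J := by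
    refine le_trans hf ?_
    exact le_iInf₂ fun p hp => iInf₂_le p (show Dideal R (FractionRing R) f ≤ p.asIdeal from hDJ.trans hp)
  obtain ⟨x, hxJ, y, hyJ, hxreg, hy⟩ := hS2.2 J hJ2
  -- x • f and y • f lie in S₀
  have hxf : x • f ∈ S₀ := hxJ
  have hyf : y • f ∈ S₀ := hyJ
  set a : S₀ := ⟨x • f, hxf⟩ with ha
  set b : S₀ := ⟨y • f, hyf⟩ with hb
  have hab : y • a = x • b := by
    apply Subtype.ext
    show y • (x • f) = x • (y • f)
    rw [smul_comm]
  have hxb : x • b ∈ Ideal.span {x} • (⊤ : Submodule R S₀) := by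
    rw [Submodule.ideal_span_singleton_smul]
    exact Submodule.smul_mem_pointwise_smul b x ⊤ Submodule.mem_top
  have hamem : a ∈ Ideal.span {x} • (⊤ : Submodule R S₀) := hy a (hab ▸ hxb)
  rw [Submodule.ideal_span_singleton_smul] at hamem
  rw [← SetLike.mem_coe, Submodule.coe_pointwise_smul] at hamem
  obtain ⟨s, -, hs⟩ := Set.mem_smul_set.mp hamem
  -- x is a nonzerodivisor of R
  have hxnzd : x ∈ nonZeroDivisors R := by
    rw [mem_nonZeroDivisors_iff_right]
    intro r hr
    have h1 : (r • (1 : S₀)) = 0 := by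
      apply hxreg
      rw [smul_smul, mul_comm, hr, zero_smul]
    have h2 : algebraMap R (FractionRing R) r = 0 := by
      have := congrArg (Subtype.val) h1
      simpa [Algebra.smul_def] using this
    exact IsFractionRing.injective R (FractionRing R) (by simpa using h2)
  have hxunit : IsUnit (algebraMap R (FractionRing R) x) :=
    IsLocalization.map_units (FractionRing R) (⟨x, hxnzd⟩ : nonZeroDivisors R)
  -- cancel x to get f = s
  have hcoe : x • (s : FractionRing R) = x • f := congrArg Subtype.val hs
  have : (s : FractionRing R) = f := by
    rw [Algebra.smul_def, Algebra.smul_def] at hcoe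
    exact hxunit.mul_left_cancel hcoe
  rw [← this]
  exact s.2
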